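/- Let G be a connected simple graph and xy a cut edge of G. Let G' be the subgraph induced by y together with all vertices reachable from x by paths avoiding y. Then H(x,y) = 2|E(G')| - 1. -/

import Mathlib

/-- `H` is the vector of expected hitting times of the simple random walk on `G`:
`H y y = 0` and for `x ≠ y`, `H x y = 1 + (average of H z y over neighbors z of x)`. -/
def IsHittingTime {V : Type*} [Fintype V] (G : SimpleGraph V) [DecidableRel G.Adj]
    (H : V → V → ℝ) : Prop :=
  (∀ y, H y y = 0) ∧
  ∀ x y, x ≠ y → H x y = 1 + (∑ z ∈ G.neighborFinset x, H z y) / (G.degree x)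

/-- Summing the hitting-time recurrences over the side `S'` of the bridge containing `x`
shows that `H x y` equals the sum of the degrees over `S'`. -/
lemma hitting_aux_sum {V : Type*} [Fintype V] [DecidableEq V] (G : SimpleGraph V)
    [DecidableRel G.Adj] (x y : V) (hadj : G.Adj x y) (H : V → V → ℝ)
    (hH0 : ∀ y, H y y = 0)
    (hHrec : ∀ x y, x ≠ y → H x y = 1 + (∑ z ∈ G.neighborFinset x, H z y) / (G.degree x))
    (S' : Finset V) (hxS : x ∈ S') (hyS : y ∉ S')
    (hdegpos : ∀ u ∈ S', 0 < G.degree u)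
    (hclosed : ∀ u ∈ S', ∀ z, G.Adj u z → z = y ∨ z ∈ S')
    (hxonly : ∀ z ∈ S', G.Adj z y → z = x) :
    H x y = ∑ u ∈ S', (G.degree u : ℝ) := by
  classical
  have hne : ∀ u ∈ S', u ≠ y := fun u hu h => hyS (h ▸ hu)
  have hmul : ∀ u ∈ S', (G.degree u : ℝ) * H u y
      = G.degree u + ∑ z ∈ G.neighborFinset u, H z y := by
    intro u hu
    have hd : (G.degree u : ℝ) ≠ 0 := by
      exact_mod_cast (hdegpos u hu).ne'
    rw [hHrec u y (hne u hu), mul_add, mul_one, mul_div_cancel₀ _ hd]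
  have hinner : ∀ u ∈ S', ∑ z ∈ G.neighborFinset u, H z y
      = ∑ z ∈ S', if G.Adj u z then H z y else 0 := by
    intro u hu
    rw [← Finset.sum_filter]
    rw [← Finset.sum_filter_of_ne (p := fun z => z ∈ S')
      (fun z hz hz0 => by
        rcases hclosed u hu z ((G.mem_neighborFinset u z).mp hz) with rfl | h
        · exact absurd (hH0 z) hz0
        · exact h)]
    apply Finset.sum_congr _ (fun _ _ => rfl)
    ext z
    simp only [Finset.mem_filter, SimpleGraph.mem_neighborFinset]
    tauto
  have hcardfil : ∀ z ∈ S',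
      ((S'.filter (fun u => G.Adj u z)).card : ℝ)
        = (G.degree z : ℝ) - (if z = x then 1 else 0) := by
    intro z hz
    have hfe : S'.filter (fun u => G.Adj u z) = (G.neighborFinset z).erase y := by
      ext u
      simp only [Finset.mem_filter, Finset.mem_erase, SimpleGraph.mem_neighborFinset]
      constructor
      · rintro ⟨h1, h2⟩
        exact ⟨hne u h1, h2.symm⟩
      · rintro ⟨h1, h2⟩
        rcases hclosed z hz u h2 with rfl | h
        · exact absurd rfl h1
        · exact ⟨h, h2.symm⟩
    rw [hfe]
    by_cases hzx : z = x
    · subst hzx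
      rw [if_pos rfl, Finset.card_erase_of_mem ((G.mem_neighborFinset z y).mpr hadj)]
      have : 0 < G.degree z := hdegpos z hz
      rw [SimpleGraph.degree] at this ⊢
      push_cast [Nat.cast_sub this]
      ring
    · rw [if_neg hzx, Finset.erase_eq_of_notMem, SimpleGraph.degree, sub_zero]
      rw [SimpleGraph.mem_neighborFinset]
      exact fun h => hzx (hxonly z hz h)
  have key : ∑ u ∈ S', (G.degree u : ℝ) * H u y
      = (∑ u ∈ S', (G.degree u : ℝ)) + ∑ u ∈ S', (G.degree u : ℝ) * H u y - H x y := by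
    calc ∑ u ∈ S', (G.degree u : ℝ) * H u y
        = ∑ u ∈ S', ((G.degree u : ℝ) + ∑ z ∈ S', if G.Adj u z then H z y else 0) := by
          refine Finset.sum_congr rfl fun u hu => ?_
          rw [hmul u hu, hinner u hu]
      _ = (∑ u ∈ S', (G.degree u : ℝ))
          + ∑ z ∈ S', ∑ u ∈ S', (if G.Adj u z then H z y else 0) := by
          rw [Finset.sum_add_distrib, Finset.sum_comm]
      _ = (∑ u ∈ S', (G.degree u : ℝ))
          + ∑ z ∈ S', ((S'.filter (fun u => G.Adj u z)).card : ℝ) * H z y := by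
          congr 1
          refine Finset.sum_congr rfl fun z _ => ?_
          rw [← Finset.sum_filter, Finset.sum_const, nsmul_eq_mul]
      _ = (∑ u ∈ S', (G.degree u : ℝ))
          + ∑ z ∈ S', ((G.degree z : ℝ) * H z y - (if z = x then H z y else 0)) := by
          congr 1
          refine Finset.sum_congr rfl fun z hz => ?_
          rw [hcardfil z hz, sub_mul, ite_mul, one_mul, zero_mul]
      _ = (∑ u ∈ S', (G.degree u : ℝ)) + ∑ u ∈ S', (G.degree u : ℝ) * H u y - H x y := by
          rw [Finset.sum_sub_distrib, Finset.sum_ite_eq' S' x (fun z => H z y), if_pos hxS]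
          ring
  linarith

/-- Counting edges of the induced subgraph on `S ∪ {y}` by summing degrees. -/
lemma hitting_aux_count {V : Type*} [Fintype V] [DecidableEq V] (G : SimpleGraph V)
    [DecidableRel G.Adj] (x y : V) (hadj : G.Adj x y)
    (S : Set V)
    (hxS : x ∈ S) (hyS : y ∉ S)
    (hclosed : ∀ u ∈ S, ∀ z, G.Adj u z → z ≠ y → z ∈ S)
    (hxonly : ∀ z ∈ S, G.Adj z y → z = x)
    (S' : Finset V) (hS' : ∀ u, u ∈ S' ↔ u ∈ S) :
    ∑ u ∈ S', G.degree u + 1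
      = 2 * Nat.card {e : Sym2 V // e ∈ G.edgeSet ∧ ∀ v ∈ e, v ∈ S ∪ {y}} := by
  classical
  set G' : SimpleGraph V :=
    { Adj := fun a b => G.Adj a b ∧ a ∈ S ∪ {y} ∧ b ∈ S ∪ {y}
      symm := ⟨fun a b ⟨h1, h2, h3⟩ => ⟨h1.symm, h3, h2⟩⟩
      loopless := ⟨fun a ⟨h1, _, _⟩ => G.ne_of_adj h1 rfl⟩ } with hG'
  haveI : DecidableRel G'.Adj := Classical.decRel _
  have hset : {e : Sym2 V | e ∈ G.edgeSet ∧ ∀ v ∈ e, v ∈ S ∪ {y}} = G'.edgeSet := by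
    ext e
    induction e using Sym2.ind with
    | _ a b =>
      simp only [Set.mem_setOf_eq, SimpleGraph.mem_edgeSet, Sym2.mem_iff, hG']
      constructor
      · rintro ⟨h1, h2⟩
        exact ⟨h1, h2 a (Or.inl rfl), h2 b (Or.inr rfl)⟩
      · rintro ⟨h1, h2, h3⟩
        refine ⟨h1, ?_⟩
        rintro v (rfl | rfl) <;> assumption
  have hcard : Nat.card {e : Sym2 V // e ∈ G.edgeSet ∧ ∀ v ∈ e, v ∈ S ∪ {y}}
      = G'.edgeFinset.card := by
    rw [show {e : Sym2 V // e ∈ G.edgeSet ∧ ∀ v ∈ e, v ∈ S ∪ {y}}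
        = {e : Sym2 V // e ∈ G'.edgeSet} from by rw [← hset]; rfl]
    rw [Nat.card_eq_card_toFinset, SimpleGraph.edgeFinset]
  have hdegS : ∀ u ∈ S', G'.degree u = G.degree u := by
    intro u hu
    rw [hS'] at hu
    unfold SimpleGraph.degree
    congr 1
    ext z
    simp only [SimpleGraph.mem_neighborFinset, hG']
    constructor
    · rintro ⟨h1, _, _⟩; exact h1
    · intro h1
      refine ⟨h1, Or.inl hu, ?_⟩
      by_cases hzy : z = y
      · exact Or.inr hzy
      · exact Or.inl (hclosed u hu z h1 hzy)
  have hdegy : G'.degree y = 1 := by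
    have : G'.neighborFinset y = {x} := by
      ext z
      simp only [SimpleGraph.mem_neighborFinset, Finset.mem_singleton, hG']
      constructor
      · rintro ⟨h1, _, (hz | hz)⟩
        · exact hxonly z hz h1.symm
        · exact absurd hz (G.ne_of_adj h1).symm
      · rintro rfl
        exact ⟨hadj.symm, Or.inr rfl, Or.inl hxS⟩
    rw [SimpleGraph.degree, this, Finset.card_singleton]
  have hdeg0 : ∀ v, v ∉ S' → v ≠ y → G'.degree v = 0 := by
    intro v hv hvy
    rw [hS'] at hv
    rw [SimpleGraph.degree, Finset.card_eq_zero]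
    ext z
    simp only [SimpleGraph.mem_neighborFinset, Finset.notMem_empty, iff_false, hG']
    rintro ⟨_, (h | h), _⟩
    · exact hv h
    · exact hvy h
  have hyS' : y ∉ S' := by rw [hS']; exact hyS
  have hsum : ∑ v : V, G'.degree v = ∑ u ∈ S', G.degree u + 1 := by
    rw [← Finset.sum_subset (Finset.subset_univ (insert y S'))]
    · rw [Finset.sum_insert hyS', hdegy, Finset.sum_congr rfl hdegS]
      ring
    · intro v _ hv
      simp only [Finset.mem_insert, not_or] at hv
      exact hdeg0 v hv.2 hv.1
  rw [hcard, ← hsum]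
  exact G'.sum_degrees_eq_twice_card_edges

theorem hitting_time_cut_edge {V : Type*} [Fintype V] [DecidableEq V] (G : SimpleGraph V)
    [DecidableRel G.Adj] (hG : G.Connected) (x y : V) (hxy : G.IsBridge s(x, y))
    (H : V → V → ℝ) (hH : IsHittingTime G H)
    -- S: vertices reachable from x by a path avoiding y
    (S : Set V) (hS : S = {u : V | ∃ p : G.Walk x u, p.IsPath ∧ y ∉ p.support}) :
    H x y = 2 * (Nat.card {e : Sym2 V // e ∈ G.edgeSet ∧ ∀ v ∈ e, v ∈ S ∪ {y}} : ℝ) - 1 := by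
  classical
  obtain ⟨hH0, hHrec⟩ := hH
  obtain ⟨hadj, hbr⟩ := And.intro (hxy.reachable_iff_adj.mp (hG.preconnected x y))
    (SimpleGraph.isBridge_iff_forall_walk_mem_edges.mp hxy)
  have hxny : x ≠ y := hadj.ne
  have hxS : x ∈ S := by
    rw [hS]; exact ⟨SimpleGraph.Walk.nil, SimpleGraph.Walk.IsPath.nil, by simp [hadj.ne']⟩
  have hyS : y ∉ S := by
    rw [hS]; rintro ⟨p, hp, hys⟩; exact hys p.end_mem_support
  have hclosed : ∀ u ∈ S, ∀ z, G.Adj u z → z ≠ y → z ∈ S := by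
    intro u hu z hz hzy
    rw [hS] at hu ⊢
    obtain ⟨p, hp, hyp⟩ := hu
    by_cases hzp : z ∈ p.support
    · exact ⟨p.takeUntil z hzp, hp.takeUntil hzp,
        fun h => hyp (p.support_takeUntil_subset hzp h)⟩
    · refine ⟨p.concat hz, ?_, ?_⟩
      · rw [SimpleGraph.Walk.isPath_def, SimpleGraph.Walk.support_concat]
        simp [List.concat_eq_append, List.nodup_append, hp.support_nodup, hzp]
        intro a ha h; exact hzp (h ▸ ha)
      · rw [SimpleGraph.Walk.support_concat]
        simp [List.concat_eq_append, hyp, Ne.symm hzy]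
  have hxonly : ∀ z ∈ S, G.Adj z y → z = x := by
    intro z hz hzy
    rw [hS] at hz; obtain ⟨p, hp, hyp⟩ := hz
    have h := hbr (p.concat hzy)
    rw [SimpleGraph.Walk.edges_concat, List.concat_eq_append, List.mem_append] at h
    rcases h with h | h
    · exact absurd (p.snd_mem_support_of_mem_edges h) hyp
    · rw [List.mem_singleton, Sym2.eq_iff] at h
      rcases h with ⟨h1, h2⟩ | ⟨h1, h2⟩
      · exact h1.symm
      · exact absurd h1 hxny
  set S' : Finset V := S.toFinset with hS'def
  have hS' : ∀ u, u ∈ S' ↔ u ∈ S := fun u => Set.mem_toFinset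
  have hxS' : x ∈ S' := (hS' x).mpr hxS
  have hyS' : y ∉ S' := fun h => hyS ((hS' y).mp h)
  have hdegpos : ∀ u ∈ S', 0 < G.degree u := by
    intro u hu
    have hne : u ≠ y := fun h => hyS' (h ▸ hu)
    obtain ⟨w⟩ := hG.preconnected u y
    cases w with
    | nil => exact absurd rfl hne
    | cons h p => exact G.degree_pos_iff_exists_adj u |>.mpr ⟨_, h⟩
  have hsum : H x y = ∑ u ∈ S', (G.degree u : ℝ) := by
    refine hitting_aux_sum G x y hadj H hH0 hHrec S' hxS' hyS' hdegpos ?_ ?_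
    · intro u hu z hz
      by_cases hzy : z = y
      · exact Or.inl hzy
      · exact Or.inr ((hS' z).mpr (hclosed u ((hS' u).mp hu) z hz hzy))
    · intro z hz hzy
      exact hxonly z ((hS' z).mp hz) hzy
  have hcount := hitting_aux_count G x y hadj S hxS hyS hclosed hxonly S' hS'
  have hcast : (∑ u ∈ S', G.degree u : ℕ) + (1 : ℝ)
      = 2 * (Nat.card {e : Sym2 V // e ∈ G.edgeSet ∧ ∀ v ∈ e, v ∈ S ∪ {y}} : ℝ) := by
    exact_mod_cast congrArg (Nat.cast : ℕ → ℝ) hcount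
  rw [hsum]
  push_cast at hcast ⊢
  linarith
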